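/- Let k be a field, A a unital associative k-algebra, and u ∈ A an element possessing a nonzero annihilating polynomial all of whose monic irreducible factors are separable. Then u admits a Jordan–Chevalley decomposition (d, s) in which both d and s lie in the unital subalgebra k[u] of A generated by u (i.e., d and s are polynomials in u with coefficients in k). -/

import Mathlib

open Polynomial

/-- An element of a `k`-algebra is absolutely semisimple if it has a separable
annihilating polynomial. -/
def AbsSemisimple (k : Type*) [Field k] {A : Type*} [Ring A] [Algebra k A] (u : A) : Prop :=
  ∃ f : k[X], f.Separable ∧ aeval u f = 0

/-- A Jordan–Chevalley decomposition of `u` is a pair `(d, s)` with `d` absolutely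
semisimple, `s` nilpotent, `u = d + s` and `d s = s d`. -/
def IsJordanChevalley (k : Type*) [Field k] {A : Type*} [Ring A] [Algebra k A]
    (u d s : A) : Prop :=
  AbsSemisimple k d ∧ IsNilpotent s ∧ u = d + s ∧ d * s = s * d

/-- A squarefree polynomial over a field all of whose irreducible factors are
separable is itself separable. -/
lemma separable_of_squarefree_of_factors {k : Type*} [Field k] {g : k[X]}
    (sqf : Squarefree g) (h : ∀ q : k[X], Irreducible q → q ∣ g → q.Separable) :
    g.Separable := by
  refine isCoprime_of_irreducible_dvd (fun hz => sqf.ne_zero hz.1) ?_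
  rintro q hq ⟨r, rfl⟩ dvd
  replace dvd : q ∣ r := by
    rw [derivative_mul, dvd_add_left (dvd_mul_right q _)] at dvd
    exact (h q hq (dvd_mul_right q r)).dvd_of_dvd_mul_left dvd
  exact hq.1 (sqf _ <| mul_dvd_mul_left _ dvd)

theorem jordan_chevalley_of_separable_annihilator
    {k : Type*} [Field k] {A : Type*} [Ring A] [Algebra k A]
    (u : A) (p : k[X]) (hp : p ≠ 0) (hann : aeval u p = 0)
    (hfac : ∀ q : k[X], q.Monic → Irreducible q → q ∣ p → q.Separable) :
    ∃ d s : A, IsJordanChevalley k u d s ∧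
      d ∈ Algebra.adjoin k ({u} : Set A) ∧ s ∈ Algebra.adjoin k ({u} : Set A) := by
  classical
  obtain ⟨g, n, sqf, hgp, hpgn⟩ := exists_squarefree_dvd_pow_of_ne_zero hp
  -- `g` is separable
  have hgsep : g.Separable := by
    refine separable_of_squarefree_of_factors sqf fun q hq hqg => ?_
    have hq0 : q ≠ 0 := hq.ne_zero
    have hnorm : (normalize q).Separable := by
      refine hfac _ (monic_normalize hq0) ?_ ?_
      · exact (associated_normalize q).irreducible hq
      · exact (normalize_dvd_iff).mpr (hqg.trans hgp)
    exact hnorm.of_dvd (dvd_normalize_iff.mpr dvd_rfl)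
  -- work inside the commutative subalgebra generated by `u`
  set B := Algebra.adjoin k ({u} : Set A)
  set ff : B := ⟨u, Algebra.self_mem_adjoin_singleton k u⟩
  have hgnil : IsNilpotent (aeval ff g) := by
    refine ⟨n, ?_⟩
    obtain ⟨q, hq⟩ := hpgn
    have : aeval u (g ^ n) = 0 := by rw [hq, map_mul, hann, zero_mul]
    rw [← map_pow, Subtype.ext_iff]
    simpa [ff, coe_aeval_mk_apply] using this
  have hgder : IsUnit (aeval ff (derivative g)) := by
    obtain ⟨a, b, hab⟩ := hgsep
    have h1 : aeval ff (a * g) + aeval ff (b * derivative g) = 1 := by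
      rw [← map_add, hab, map_one]
    have hnil : IsNilpotent (aeval ff (a * g)) := by
      rw [map_mul]; exact (Commute.all _ _).isNilpotent_mul_left hgnil
    have h2 : aeval ff (b * derivative g) = 1 - aeval ff (a * g) := by
      rw [← h1]; ring
    have h3 : IsUnit (aeval ff (b * derivative g)) := by
      rw [h2]; exact hnil.isUnit_one_sub
    rw [map_mul] at h3
    exact isUnit_of_mul_isUnit_right h3
  obtain ⟨r, ⟨hrnil, hroot⟩, -⟩ :=
    Polynomial.existsUnique_nilpotent_sub_and_aeval_eq_zero hgnil hgder
  refine ⟨(r : A), u - (r : A), ⟨⟨g, hgsep, ?_⟩, ?_, by rw [add_sub_cancel], ?_⟩, r.2, sub_mem ff.2 r.2⟩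
  · have h4 := aeval_algHom_apply B.val r g
    rw [hroot] at h4
    simpa using h4
  · obtain ⟨m, hm⟩ := hrnil
    refine ⟨m, ?_⟩
    have : ((ff - r) ^ m : B) = 0 := hm
    have h2 := congrArg (Subalgebra.val B) this
    simpa [ff] using h2
  · have : (r * (ff - r) : B) = (ff - r) * r := mul_comm _ _
    have h2 := congrArg (Subalgebra.val B) this
    simpa [ff] using h2
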